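/- Every graph G with m(G) < 3/2 is 3-colourable, and admits an orientation containing no directed path with 3 edges. -/

import Mathlib

/-- An orientation of a simple graph `G`: an assignment of a direction to each edge. -/
structure GraphOrientation {V : Type*} (G : SimpleGraph V) where
  adj : V → V → Prop
  le : ∀ {u v}, adj u v → G.Adj u v
  total : ∀ {u v}, G.Adj u v → adj u v ∨ adj v u
  asymm : ∀ {u v}, adj u v → ¬ adj v u

section Aux
open scoped Classical

variable {V : Type*} [Fintype V] (G : SimpleGraph V)

/-- The restriction of `G` to a finset `s`, as a simple graph on `V`. -/
private def restrictG (s : Finset V) : SimpleGraph V where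
  Adj a b := a ∈ s ∧ b ∈ s ∧ G.Adj a b
  symm := ⟨fun a b h => ⟨h.2.1, h.1, h.2.2.symm⟩⟩
  loopless := ⟨fun a h => G.loopless.irrefl a h.2.2⟩

/-- The restriction of `G` to a finset `s`, as a subgraph. -/
private def restrictSub (s : Finset V) : G.Subgraph where
  verts := ↑s
  Adj a b := a ∈ s ∧ b ∈ s ∧ G.Adj a b
  adj_sub h := h.2.2
  edge_vert h := h.1
  symm := ⟨fun a b h => ⟨h.2.1, h.1, h.2.2.symm⟩⟩

private lemma exists_low_degree
    (hm : ∀ J : G.Subgraph, J.verts.Nonempty →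
      (J.edgeSet.ncard : ℚ) < (3 / 2 : ℚ) * J.verts.ncard)
    (s : Finset V) (hs : s.Nonempty) :
    ∃ v ∈ s, (s.filter (G.Adj v)).card ≤ 2 := by
  classical
  by_contra hcon
  push_neg at hcon
  set G' := restrictG G s with hG'
  have hedge : (restrictSub G s).edgeSet = G'.edgeSet := by
    ext e
    induction e using Sym2.ind with
    | _ a b =>
      simp [SimpleGraph.Subgraph.mem_edgeSet, SimpleGraph.mem_edgeSet,
        restrictSub, restrictG, hG']
  have hnbr : ∀ v ∈ s, G'.neighborFinset v = s.filter (G.Adj v) := by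
    intro v hv
    ext w
    simp [SimpleGraph.mem_neighborFinset, restrictG, hG', hv]
  -- handshake
  have hsum : ∑ v, G'.degree v = 2 * G'.edgeFinset.card :=
    G'.sum_degrees_eq_twice_card_edges
  have hsum2 : 3 * s.card ≤ ∑ v, G'.degree v := by
    have h1 : ∑ v ∈ s, G'.degree v = ∑ v, G'.degree v := by
      apply Finset.sum_subset (Finset.subset_univ s)
      intro v _ hv
      rw [SimpleGraph.degree, Finset.card_eq_zero, Finset.eq_empty_iff_forall_notMem]
      intro w hw
      rw [SimpleGraph.mem_neighborFinset] at hw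
      exact hv hw.1
    calc 3 * s.card = ∑ _v ∈ s, 3 := by rw [Finset.sum_const]; ring
      _ ≤ ∑ v ∈ s, G'.degree v := by
          apply Finset.sum_le_sum
          intro v hv
          rw [SimpleGraph.degree, hnbr v hv]
          exact hcon v hv
      _ = ∑ v, G'.degree v := h1
  have hlt := hm (restrictSub G s) (by simpa [restrictSub] using Finset.coe_nonempty.mpr hs)
  have hverts : (restrictSub G s).verts.ncard = s.card := by
    simp [restrictSub, Set.ncard_coe_finset]
  have hecard : (restrictSub G s).edgeSet.ncard = G'.edgeFinset.card := by
    rw [hedge, SimpleGraph.edgeFinset, Set.ncard_eq_toFinset_card']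
  rw [hverts, hecard] at hlt
  have h2e : (2 * G'.edgeFinset.card : ℚ) < 3 * s.card := by
    push_cast
    linarith
  have := hsum2.trans_eq hsum
  have : (3 * s.card : ℚ) ≤ 2 * G'.edgeFinset.card := by exact_mod_cast this
  linarith

private lemma exists_partial_coloring
    (hm : ∀ J : G.Subgraph, J.verts.Nonempty →
      (J.edgeSet.ncard : ℚ) < (3 / 2 : ℚ) * J.verts.ncard)
    (s : Finset V) :
    ∃ c : V → Fin 3, ∀ u ∈ s, ∀ w ∈ s, G.Adj u w → c u ≠ c w := by
  classical
  induction s using Finset.strongInduction with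
  | _ s ih =>
    rcases s.eq_empty_or_nonempty with rfl | hs
    · exact ⟨fun _ => 0, by simp⟩
    obtain ⟨v, hv, hdeg⟩ := exists_low_degree G hm s hs
    obtain ⟨c, hc⟩ := ih (s.erase v) (Finset.erase_ssubset hv)
    set F : Finset (Fin 3) := ((s.erase v).filter (G.Adj v)).image c with hF
    have hFcard : F.card < 3 := by
      calc F.card ≤ ((s.erase v).filter (G.Adj v)).card := Finset.card_image_le
        _ ≤ (s.filter (G.Adj v)).card :=
            Finset.card_le_card (Finset.filter_subset_filter _ (Finset.erase_subset _ _))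
        _ ≤ 2 := hdeg
        _ < 3 := by norm_num
    have : ∃ k : Fin 3, k ∉ F := by
      by_contra hk
      push_neg at hk
      have : (Finset.univ : Finset (Fin 3)) ⊆ F := fun k _ => hk k
      have := Finset.card_le_card this
      simp at this
      omega
    obtain ⟨k, hk⟩ := this
    refine ⟨Function.update c v k, ?_⟩
    intro u hu w hw hadj
    simp only [Function.update_apply]
    split_ifs with h1 h2 h2
    · subst h1; subst h2
      exact absurd hadj (G.loopless.irrefl _)
    · intro hkc
      apply hk
      rw [hF, hkc]
      exact Finset.mem_image_of_mem c
        (Finset.mem_filter.mpr ⟨Finset.mem_erase.mpr ⟨h2, hw⟩, h1 ▸ hadj⟩)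
    · intro hkc
      apply hk
      rw [hF, ← hkc]
      exact Finset.mem_image_of_mem c
        (Finset.mem_filter.mpr ⟨Finset.mem_erase.mpr ⟨h1, hu⟩, (h2 ▸ hadj).symm⟩)
    · exact hc u (Finset.mem_erase.mpr ⟨h1, hu⟩) w (Finset.mem_erase.mpr ⟨h2, hw⟩) hadj

end Aux

/-- Every graph `G` with `m(G) < 3/2` is 3-colourable, and admits an
orientation containing no directed path with 3 edges (4 distinct vertices
`v₁ → v₂ → v₃ → v₄`). -/
theorem colorable_and_no_directed_three_path {V : Type*} [Fintype V]
    (G : SimpleGraph V)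
    (hm : ∀ J : G.Subgraph, J.verts.Nonempty →
      (J.edgeSet.ncard : ℚ) < (3 / 2 : ℚ) * J.verts.ncard) :
    G.Colorable 3 ∧
    ∃ o : GraphOrientation G, ¬ ∃ v : Fin 4 → V, Function.Injective v ∧
      o.adj (v 0) (v 1) ∧ o.adj (v 1) (v 2) ∧ o.adj (v 2) (v 3) := by
  classical
  obtain ⟨c, hc⟩ := exists_partial_coloring G hm Finset.univ
  have hc' : ∀ {u w : V}, G.Adj u w → c u ≠ c w := fun h =>
    hc _ (Finset.mem_univ _) _ (Finset.mem_univ _) h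
  constructor
  · exact ⟨SimpleGraph.Coloring.mk c fun h => hc' h⟩
  · refine ⟨⟨fun u w => G.Adj u w ∧ c u < c w, fun h => h.1,
      fun h => ?_, fun h h' => absurd h'.2 (not_lt.mpr (le_of_lt h.2))⟩, ?_⟩
    · rcases lt_or_gt_of_ne (hc' h) with h' | h'
      · exact Or.inl ⟨h, h'⟩
      · exact Or.inr ⟨h.symm, h'⟩
    · rintro ⟨v, -, h01, h12, h23⟩
      have a := h01.2
      have b := h12.2
      have d := h23.2
      have h0 := (c (v 0)).isLt
      have h1 := (c (v 1)).isLt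
      have h2 := (c (v 2)).isLt
      have h3 := (c (v 3)).isLt
      rw [Fin.lt_def] at a b d
      omega
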